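/- arXiv:math-ph/0011046 — 2 statements merged into one kernel-verified Lean document; each statement's English description precedes it below -/
import Mathlib

section
/- Let d ≥ 1 and let a ≥ b > 0 with a > d. Then there exists a constant C, depending only on a, b and d, such that for all functions f, g : ℤ^d → ℝ satisfying |f(x)| ≤ (|x|+1)^{−a} and |g(x)| ≤ (|x|+1)^{−b} for all x ∈ ℤ^d, the convolution satisfies |(f*g)(x)| ≤ C(|x|+1)^{−b} for all x ∈ ℤ^d. -/
open scoped BigOperators

/-- The Euclidean norm of a point of `ℤ^d`. -/
noncomputable def znorm {d : ℕ} (x : Fin d → ℤ) : ℝ :=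
  Real.sqrt (∑ i, ((x i : ℝ)) ^ 2)

lemma znorm_nonneg {d : ℕ} (x : Fin d → ℤ) : 0 ≤ znorm x := Real.sqrt_nonneg _

lemma znorm_eq_norm {d : ℕ} (x : Fin d → ℤ) :
    znorm x = ‖(WithLp.equiv 2 (Fin d → ℝ)).symm (fun i => (x i : ℝ))‖ := by
  rw [EuclideanSpace.norm_eq, znorm]
  congr 1
  refine Finset.sum_congr rfl fun i _ => ?_
  simp [WithLp.equiv_symm_apply, Real.norm_eq_abs, sq_abs]

lemma znorm_triangle {d : ℕ} (x y : Fin d → ℤ) : znorm x ≤ znorm (x - y) + znorm y := by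
  rw [znorm_eq_norm, znorm_eq_norm, znorm_eq_norm]
  have : (WithLp.equiv 2 (Fin d → ℝ)).symm (fun i => ((x i : ℝ))) =
      (WithLp.equiv 2 (Fin d → ℝ)).symm (fun i => (((x - y) i : ℝ))) +
      (WithLp.equiv 2 (Fin d → ℝ)).symm (fun i => ((y i : ℝ))) := by
    rw [WithLp.equiv_symm_apply, ← WithLp.toLp_add]
    congr 1
    funext i
    simp [Pi.sub_apply]
  rw [this]
  exact norm_add_le _ _

lemma coord_le_znorm {d : ℕ} (x : Fin d → ℤ) (i : Fin d) : |(x i : ℝ)| ≤ znorm x := by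
  rw [← Real.sqrt_sq_eq_abs]
  exact Real.sqrt_le_sqrt
    (Finset.single_le_sum (fun j _ => sq_nonneg ((x j : ℝ))) (Finset.mem_univ i))

lemma summable_w {p : ℝ} (hp : 1 < p) : Summable (fun n : ℤ => (|(n : ℝ)| + 1) ^ (-p)) := by
  have hnat : Summable (fun n : ℕ => ((n : ℝ) + 1) ^ (-p)) := by
    have := (Real.summable_nat_rpow (p := -p)).mpr (by linarith)
    have h2 := (summable_nat_add_iff (f := fun n : ℕ => (n : ℝ) ^ (-p)) 1).mpr this
    refine h2.congr fun n => ?_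
    push_cast
    ring_nf
  apply Summable.of_nat_of_neg
  · refine hnat.congr fun n => ?_
    simp
  · refine hnat.congr fun n => ?_
    simp

lemma summable_pi_prod {w : ℤ → ℝ} (hw0 : ∀ n, 0 ≤ w n) (hw : Summable w) :
    ∀ n : ℕ, Summable (fun y : Fin n → ℤ => ∏ i, w (y i)) := by
  intro n
  induction n with
  | zero => exact summable_of_finite_support (Set.toFinite _)
  | succ n ih =>
      have h1 : (0 : ℤ → ℝ) ≤ w := fun n => hw0 n
      have h2 : (0 : (Fin n → ℤ) → ℝ) ≤ fun y : Fin n → ℤ => ∏ i, w (y i) :=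
        fun z => Finset.prod_nonneg fun _ _ => hw0 _
      refine (Fin.consEquiv (fun _ : Fin (n+1) => ℤ)).summable_iff.mp
        ((Summable.mul_of_nonneg hw ih h1 h2).congr fun p => ?_)
      simp [Fin.consEquiv, Fin.prod_univ_succ, Function.comp]

/-- Summability of `(znorm y + 1) ^ (-a)` for `a > d`. -/
lemma summable_znorm {d : ℕ} (hd : 1 ≤ d) {a : ℝ} (had : (d : ℝ) < a) :
    Summable (fun y : Fin d → ℤ => (znorm y + 1) ^ (-a)) := by
  have hd0 : (0 : ℝ) < d := by exact_mod_cast hd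
  set p : ℝ := a / d with hp_def
  have hp : 1 < p := (one_lt_div hd0).mpr had
  have hw0 : ∀ n : ℤ, 0 ≤ (|(n : ℝ)| + 1) ^ (-p) := fun n => Real.rpow_nonneg (by positivity) _
  refine Summable.of_nonneg_of_le (fun y => Real.rpow_nonneg (by linarith [znorm_nonneg y]) _)
    (fun y => ?_) (summable_pi_prod hw0 (summable_w hp) d)
  -- (znorm y + 1)^(-a) ≤ ∏ i, (|y i| + 1)^(-p)
  have hzy : 0 < znorm y + 1 := by linarith [znorm_nonneg y]
  have step1 : (znorm y + 1) ^ (-a) = ∏ _i : Fin d, (znorm y + 1) ^ (-p) := by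
    rw [Finset.prod_const, Finset.card_univ, Fintype.card_fin,
      ← Real.rpow_natCast ((znorm y + 1) ^ (-p)) d, ← Real.rpow_mul hzy.le]
    congr 1
    rw [hp_def]
    field_simp
  rw [step1]
  refine Finset.prod_le_prod (fun i _ => Real.rpow_nonneg hzy.le _) (fun i _ => ?_)
  refine Real.rpow_le_rpow_of_nonpos (by positivity) ?_ (by linarith)
  linarith [coord_le_znorm y i]

/-- The key pointwise inequality. -/
lemma key_ineq {a b X Y Z : ℝ} (hb : 0 < b) (hba : b ≤ a)
    (hX : 1 ≤ X) (hY : 1 ≤ Y) (hZ : 1 ≤ Z) (htri : X ≤ Z + Y) :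
    Z ^ (-a) * Y ^ (-b) ≤ 2 ^ a * X ^ (-b) * (Z ^ (-a) + Y ^ (-a)) := by
  have hX0 : (0:ℝ) < X := by linarith
  have hY0 : (0:ℝ) < Y := by linarith
  have hZ0 : (0:ℝ) < Z := by linarith
  have hhalf : ∀ c : ℝ, (X / 2) ^ (-c) = 2 ^ c * X ^ (-c) := by
    intro c
    rw [Real.div_rpow hX0.le (by norm_num), Real.rpow_neg (by norm_num : (0:ℝ) ≤ 2) c,
      div_eq_mul_inv, inv_inv]
    ring
  have h2ba : (2:ℝ) ^ b ≤ 2 ^ a := Real.rpow_le_rpow_of_exponent_le one_le_two hba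
  have hZa0 : 0 ≤ Z ^ (-a) := Real.rpow_nonneg hZ0.le _
  have hYa0 : 0 ≤ Y ^ (-a) := Real.rpow_nonneg hY0.le _
  have hXb0 : 0 ≤ X ^ (-b) := Real.rpow_nonneg hX0.le _
  by_cases h : X ≤ 2 * Y
  · -- Y is large
    have hYb : Y ^ (-b) ≤ 2 ^ b * X ^ (-b) := by
      rw [← hhalf b]
      exact Real.rpow_le_rpow_of_nonpos (by linarith) (by linarith) (by linarith)
    calc Z ^ (-a) * Y ^ (-b) ≤ Z ^ (-a) * (2 ^ b * X ^ (-b)) := by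
          exact mul_le_mul_of_nonneg_left hYb hZa0
      _ ≤ 2 ^ a * X ^ (-b) * (Z ^ (-a) + Y ^ (-a)) := by
          nlinarith [mul_nonneg hZa0 hXb0, mul_nonneg (mul_nonneg hXb0 hYa0)
            (by positivity : (0:ℝ) ≤ (2:ℝ) ^ a)]
  · -- Z is large
    push_neg at h
    have hYX : Y ≤ X := by linarith
    have hZX : X ≤ 2 * Z := by linarith
    have hZa : Z ^ (-a) ≤ 2 ^ a * X ^ (-a) := by
      rw [← hhalf a]
      exact Real.rpow_le_rpow_of_nonpos (by linarith) (by linarith) (by linarith)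
    have hYb : Y ^ (-b) ≤ X ^ (a - b) * Y ^ (-a) := by
      have : Y ^ (-b) = Y ^ (a - b) * Y ^ (-a) := by
        rw [← Real.rpow_add hY0]; ring_nf
      rw [this]
      exact mul_le_mul_of_nonneg_right
        (Real.rpow_le_rpow hY0.le hYX (by linarith)) hYa0
    have hXX : X ^ (-a) * X ^ (a - b) = X ^ (-b) := by
      rw [← Real.rpow_add hX0]; ring_nf
    calc Z ^ (-a) * Y ^ (-b) ≤ (2 ^ a * X ^ (-a)) * (X ^ (a - b) * Y ^ (-a)) := by
          exact mul_le_mul hZa hYb (Real.rpow_nonneg hY0.le _) (by positivity)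
      _ = 2 ^ a * (X ^ (-a) * X ^ (a - b)) * Y ^ (-a) := by ring
      _ = 2 ^ a * X ^ (-b) * Y ^ (-a) := by rw [hXX]
      _ ≤ 2 ^ a * X ^ (-b) * (Z ^ (-a) + Y ^ (-a)) := by
          refine mul_le_mul_of_nonneg_left (by linarith) (by positivity)

set_option maxHeartbeats 1000000 in
theorem stmt1 (d : ℕ) (hd : 1 ≤ d) (a b : ℝ) (hb : 0 < b) (hba : b ≤ a)
    (had : (d : ℝ) < a) :
    ∃ C : ℝ, 0 < C ∧ ∀ f g : (Fin d → ℤ) → ℝ,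
      (∀ x, |f x| ≤ (znorm x + 1) ^ (-a)) →
      (∀ x, |g x| ≤ (znorm x + 1) ^ (-b)) →
      ∀ x : Fin d → ℤ,
        |∑' y : Fin d → ℤ, f (x - y) * g y| ≤ C * (znorm x + 1) ^ (-b) := by
  set u : (Fin d → ℤ) → ℝ := fun y => (znorm y + 1) ^ (-a) with hu_def
  have hu : Summable u := summable_znorm hd had
  set S : ℝ := ∑' y : Fin d → ℤ, u y with hS_def
  have hS0 : 0 ≤ S := tsum_nonneg fun y => Real.rpow_nonneg (by linarith [znorm_nonneg y]) _
  have h2a0 : (0:ℝ) < 2 ^ a := Real.rpow_pos_of_pos (by norm_num) _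
  refine ⟨2 ^ a * (2 * S + 1), by positivity, fun f g hf hg x => ?_⟩
  have hX0 : (0:ℝ) < znorm x + 1 := by linarith [znorm_nonneg x]
  have hXb0 : 0 ≤ (znorm x + 1) ^ (-b) := Real.rpow_nonneg hX0.le _
  -- translated summability
  have hux : Summable (fun y : Fin d → ℤ => u (x - y)) := by
    have := (Equiv.subLeft x).summable_iff.mpr hu
    exact this.congr fun y => by simp [Equiv.subLeft]
  have huxS : ∑' y : Fin d → ℤ, u (x - y) = S := by
    rw [hS_def]
    have := (Equiv.subLeft x).tsum_eq u
    rw [← this]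
    exact tsum_congr fun y => by simp [Equiv.subLeft]
  have hu0 : ∀ y : Fin d → ℤ, 0 ≤ u y := fun y =>
    Real.rpow_nonneg (by linarith [znorm_nonneg y]) _
  -- bound on T
  have hTle : ∀ y : Fin d → ℤ,
      (znorm (x - y) + 1) ^ (-a) * (znorm y + 1) ^ (-b) ≤ u (x - y) := by
    intro y
    have h1 : (znorm y + 1) ^ (-b) ≤ 1 :=
      Real.rpow_le_one_of_one_le_of_nonpos (by linarith [znorm_nonneg y]) (by linarith)
    exact mul_le_of_le_one_right (hu0 _) h1
  have hT0 : ∀ y : Fin d → ℤ,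
      0 ≤ (znorm (x - y) + 1) ^ (-a) * (znorm y + 1) ^ (-b) := fun y =>
    mul_nonneg (hu0 _) (Real.rpow_nonneg (by linarith [znorm_nonneg y]) _)
  have hTsum : Summable (fun y : Fin d → ℤ =>
      (znorm (x - y) + 1) ^ (-a) * (znorm y + 1) ^ (-b)) :=
    Summable.of_nonneg_of_le hT0 hTle hux
  -- pointwise bound on the convolution summand
  have habsle : ∀ y : Fin d → ℤ, |f (x - y) * g y| ≤
      (znorm (x - y) + 1) ^ (-a) * (znorm y + 1) ^ (-b) := by
    intro y
    rw [abs_mul]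
    exact mul_le_mul (hf _) (hg _) (abs_nonneg _)
      (Real.rpow_nonneg (by linarith [znorm_nonneg (x - y)]) _)
  have habssum : Summable (fun y : Fin d → ℤ => |f (x - y) * g y|) :=
    Summable.of_nonneg_of_le (fun y => abs_nonneg _) habsle hTsum
  -- key pointwise
  have hkey : ∀ y : Fin d → ℤ,
      (znorm (x - y) + 1) ^ (-a) * (znorm y + 1) ^ (-b) ≤
      2 ^ a * (znorm x + 1) ^ (-b) * (u (x - y) + u y) := by
    intro y
    refine key_ineq hb hba (by linarith [znorm_nonneg x]) (by linarith [znorm_nonneg y])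
      (by linarith [znorm_nonneg (x - y)]) ?_
    linarith [znorm_triangle x y, znorm_nonneg y]
  have hkeysum : Summable (fun y : Fin d → ℤ =>
      2 ^ a * (znorm x + 1) ^ (-b) * (u (x - y) + u y)) :=
    (hux.add hu).mul_left _
  calc |∑' y : Fin d → ℤ, f (x - y) * g y|
      ≤ ∑' y : Fin d → ℤ, |f (x - y) * g y| := by
        simpa only [Real.norm_eq_abs] using
          norm_tsum_le_tsum_norm (f := fun y : Fin d → ℤ => f (x - y) * g y)
            (by simpa only [Real.norm_eq_abs] using habssum)
    _ ≤ ∑' y : Fin d → ℤ, (znorm (x - y) + 1) ^ (-a) * (znorm y + 1) ^ (-b) :=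
        Summable.tsum_le_tsum habsle habssum hTsum
    _ ≤ ∑' y : Fin d → ℤ, 2 ^ a * (znorm x + 1) ^ (-b) * (u (x - y) + u y) :=
        Summable.tsum_le_tsum hkey hTsum hkeysum
    _ = 2 ^ a * (znorm x + 1) ^ (-b) * (S + S) := by
        rw [tsum_mul_left, Summable.tsum_add hux hu, huxS]
    _ ≤ 2 ^ a * (2 * S + 1) * (znorm x + 1) ^ (-b) := by
        nlinarith [mul_nonneg h2a0.le hXb0]
end

section
/- Let d ≥ 1 and let a ≥ b > 0 with a < d and a + b > d. Then there exists a constant C, depending only on a, b and d, such that for all functions f, g : ℤ^d → ℝ satisfying |f(x)| ≤ (|x|+1)^{−a} and |g(x)| ≤ (|x|+1)^{−b} for all x ∈ ℤ^d, the convolution satisfies |(f*g)(x)| ≤ C(|x|+1)^{d−(a+b)} for all x ∈ ℤ^d. -/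
open scoped BigOperators

namespace Stmt2Aux

variable {d : ℕ}

def nn (y : Fin d → ℤ) : ℕ := Finset.univ.sup fun i => (y i).natAbs

def NN (y : Fin d → ℤ) : ℕ := nn y + 1

lemma one_le_NN (y : Fin d → ℤ) : 1 ≤ NN y := Nat.succ_le_succ (Nat.zero_le _)

noncomputable def box (d K : ℕ) : Finset (Fin d → ℤ) := Fintype.piFinset fun _ => Finset.Icc (-(K:ℤ)) K

lemma nn_le_iff {y : Fin d → ℤ} {K : ℕ} : nn y ≤ K ↔ ∀ i, (y i).natAbs ≤ K := by
  simp [nn, Finset.sup_le_iff]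

lemma mem_box {K : ℕ} {y : Fin d → ℤ} : y ∈ box d K ↔ nn y ≤ K := by
  rw [box, Fintype.mem_piFinset, nn_le_iff]
  apply forall_congr'
  intro i
  rw [Finset.mem_Icc]
  omega

lemma card_box (K : ℕ) : (box d K).card = (2*K+1)^d := by
  rw [box, Fintype.card_piFinset]
  have h : ((K:ℤ) + 1 + K).toNat = 2*K+1 := by omega
  simp [Int.card_Icc, sub_neg_eq_add, h]

lemma NN_real_pos (y : Fin d → ℤ) : (0:ℝ) < (NN y : ℝ) := by
  exact_mod_cast one_le_NN y

lemma pow_rpow_comm (j : ℕ) (c : ℝ) : (((2:ℝ)^j)) ^ c = ((2:ℝ) ^ c) ^ j := by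
  rw [← Real.rpow_natCast (2:ℝ) j, ← Real.rpow_mul (by norm_num), mul_comm,
    Real.rpow_mul (by norm_num : (0:ℝ) ≤ 2), Real.rpow_natCast]

lemma fiber_sum_le (F : Finset (Fin d → ℤ)) {s : ℝ} (hs : 0 ≤ s) (j : ℕ) :
    ∑ y ∈ F.filter (fun y => Nat.log 2 (NN y) = j), ((NN y : ℝ)) ^ (-s)
      ≤ (8:ℝ)^d * ((2:ℝ) ^ ((d:ℝ) - s)) ^ j := by
  set F' := F.filter (fun y => Nat.log 2 (NN y) = j) with hF'
  have hterm : ∀ y ∈ F', ((NN y:ℝ))^(-s) ≤ ((2:ℝ)^j)^(-s) := by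
    intro y hy
    have hlog := (Finset.mem_filter.mp hy).2
    have h1 : 2^j ≤ NN y := by
      have := Nat.pow_log_le_self 2 (Nat.one_le_iff_ne_zero.mp (one_le_NN y))
      rwa [hlog] at this
    exact Real.rpow_le_rpow_of_nonpos (by positivity) (by exact_mod_cast h1) (neg_nonpos.mpr hs)
  have hsub : F' ⊆ box d (2^(j+1)) := by
    intro y hy
    have hlog := (Finset.mem_filter.mp hy).2
    have h2 : NN y < 2^(j+1) := by
      have := Nat.lt_pow_succ_log_self (by norm_num : 1 < 2) (NN y)
      rwa [hlog] at this
    rw [mem_box]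
    have : nn y + 1 < 2^(j+1) := h2
    omega
  have hcardN : F'.card ≤ (2^(j+3))^d := by
    calc F'.card ≤ (box d (2^(j+1))).card := Finset.card_le_card hsub
      _ = (2*2^(j+1)+1)^d := card_box _
      _ ≤ (2^(j+3))^d := by
          apply Nat.pow_le_pow_left
          have : 1 ≤ 2^(j+2) := Nat.one_le_two_pow
          calc 2*2^(j+1)+1 = 2^(j+2)+1 := by ring_nf
            _ ≤ 2^(j+2)+2^(j+2) := by omega
            _ = 2^(j+3) := by ring
  have hcardR : (F'.card : ℝ) ≤ ((2:ℝ)^(j+3))^d := by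
    calc (F'.card : ℝ) ≤ (((2^(j+3))^d : ℕ) : ℝ) := by exact_mod_cast hcardN
      _ = ((2:ℝ)^(j+3))^d := by push_cast; ring
  calc ∑ y ∈ F', ((NN y : ℝ)) ^ (-s) ≤ F'.card • (((2:ℝ)^j)^(-s)) :=
        Finset.sum_le_card_nsmul _ _ _ hterm
    _ = (F'.card : ℝ) * (((2:ℝ)^j)^(-s)) := nsmul_eq_mul _ _
    _ ≤ ((2:ℝ)^(j+3))^d * (((2:ℝ)^j)^(-s)) := by
        apply mul_le_mul_of_nonneg_right hcardR (Real.rpow_nonneg (by positivity) _)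
    _ = (8:ℝ)^d * ((2:ℝ) ^ ((d:ℝ) - s)) ^ j := by
        have hA : ((2:ℝ)^(j+3))^d = (8:ℝ)^d * ((2:ℝ)^j)^d := by
          rw [pow_add, mul_pow]; norm_num; ring
        rw [hA, mul_assoc]
        congr 1
        have hApos : (0:ℝ) < (2:ℝ)^j := by positivity
        rw [← Real.rpow_natCast ((2:ℝ)^j) d, ← Real.rpow_add hApos, ← pow_rpow_comm,
          sub_eq_add_neg]

lemma lemA {s : ℝ} (hs0 : 0 < s) (hsd : s < d) :
    ∃ C : ℝ, 0 < C ∧ ∀ K : ℕ, ∑ y ∈ box d K, ((NN y:ℝ)) ^ (-s) ≤ C * ((K:ℝ)+1) ^ ((d:ℝ) - s) := by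
  set ρ : ℝ := (2:ℝ) ^ ((d:ℝ) - s) with hρdef
  have hρ1 : 1 < ρ := by
    rw [hρdef]
    rw [Real.one_lt_rpow_iff_of_pos (by norm_num)]
    exact Or.inl ⟨by norm_num, by linarith⟩
  have hρ0 : 0 < ρ := lt_trans one_pos hρ1
  have hCpos : 0 < (8:ℝ)^d * ρ / (ρ - 1) := div_pos (by positivity) (by linarith)
  refine ⟨(8:ℝ)^d * ρ / (ρ - 1), hCpos, ?_⟩
  intro K
  set J := Nat.log 2 (K+1) with hJ
  have hmaps : ∀ y ∈ box d K, Nat.log 2 (NN y) ∈ Finset.range (J+1) := by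
    intro y hy
    rw [Finset.mem_range, Nat.lt_succ_iff, hJ]
    apply Nat.log_mono_right
    have : nn y ≤ K := mem_box.mp hy
    simp only [NN]
    omega
  have hsplit := Finset.sum_fiberwise_of_maps_to hmaps (fun y => ((NN y:ℝ)) ^ (-s))
  rw [← hsplit]
  have hbound : ∑ j ∈ Finset.range (J+1),
        ∑ y ∈ (box d K).filter (fun y => Nat.log 2 (NN y) = j), ((NN y:ℝ))^(-s)
      ≤ ∑ j ∈ Finset.range (J+1), (8:ℝ)^d * ρ^j :=
    Finset.sum_le_sum fun j _ => fiber_sum_le _ hs0.le j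
  refine hbound.trans ?_
  rw [← Finset.mul_sum, geom_sum_eq (ne_of_gt hρ1)]
  have h1 : (ρ^(J+1) - 1)/(ρ - 1) ≤ ρ^(J+1)/(ρ-1) := by
    apply div_le_div_of_nonneg_right ?_ (by linarith)
    linarith
  have hρJ : ρ^J ≤ ((K:ℝ)+1) ^ ((d:ℝ) - s) := by
    rw [hρdef, ← pow_rpow_comm]
    apply Real.rpow_le_rpow (by positivity) ?_ (by linarith)
    have h2 : 2^J ≤ K+1 := Nat.pow_log_le_self 2 (Nat.succ_ne_zero K)
    exact_mod_cast h2
  calc (8:ℝ)^d * ((ρ^(J+1) - 1)/(ρ - 1)) ≤ (8:ℝ)^d * (ρ^(J+1)/(ρ-1)) := by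
        apply mul_le_mul_of_nonneg_left h1 (by positivity)
    _ = ((8:ℝ)^d * ρ / (ρ - 1)) * ρ^J := by rw [pow_succ]; ring
    _ ≤ ((8:ℝ)^d * ρ / (ρ - 1)) * (((K:ℝ)+1) ^ ((d:ℝ) - s)) := by
        apply mul_le_mul_of_nonneg_left hρJ hCpos.le

lemma lemB {t : ℝ} (htd : (d:ℝ) < t) :
    ∃ C : ℝ, 0 < C ∧ ∀ M : ℕ, 1 ≤ M → ∀ F : Finset (Fin d → ℤ), (∀ y ∈ F, M ≤ NN y) →
      ∑ y ∈ F, ((NN y:ℝ)) ^ (-t) ≤ C * ((M:ℝ)) ^ ((d:ℝ) - t) := by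
  have ht0 : 0 < t := lt_of_le_of_lt (Nat.cast_nonneg d) htd
  set ρ : ℝ := (2:ℝ) ^ ((d:ℝ) - t) with hρdef
  have hρ1 : ρ < 1 := by
    rw [hρdef]
    rw [Real.rpow_lt_one_iff (by norm_num)]
    right; left
    exact ⟨by norm_num, by linarith⟩
  have hρ0 : 0 < ρ := Real.rpow_pos_of_pos (by norm_num) _
  have hCpos : 0 < (8:ℝ)^d * (2:ℝ)^(t - (d:ℝ)) / (1 - ρ) := by
    apply div_pos ?_ (by linarith)
    apply mul_pos (by positivity) (Real.rpow_pos_of_pos (by norm_num) _)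
  refine ⟨(8:ℝ)^d * (2:ℝ)^(t - (d:ℝ)) / (1 - ρ), hCpos, ?_⟩
  intro M hM F hF
  set J0 := Nat.log 2 M with hJ0
  set J := F.sup (fun y => Nat.log 2 (NN y)) with hJdef
  have hmaps : ∀ y ∈ F, Nat.log 2 (NN y) ∈ Finset.range (J+1) := by
    intro y hy
    rw [Finset.mem_range, Nat.lt_succ_iff]
    exact Finset.le_sup (f := fun y => Nat.log 2 (NN y)) hy
  have hsplit := Finset.sum_fiberwise_of_maps_to hmaps (fun y => ((NN y:ℝ)) ^ (-t))
  rw [← hsplit]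
  -- fibers with j < J0 are empty
  have hlow : ∀ j ∈ Finset.range (J+1), j < J0 →
      ∑ y ∈ F.filter (fun y => Nat.log 2 (NN y) = j), ((NN y:ℝ))^(-t) = 0 := by
    intro j _ hj
    rw [Finset.sum_eq_zero_iff_of_nonneg
      (fun y _ => Real.rpow_nonneg (Nat.cast_nonneg _) _)]
    intro y hy
    exfalso
    have hlog := (Finset.mem_filter.mp hy).2
    have hyF := (Finset.mem_filter.mp hy).1
    have : J0 ≤ Nat.log 2 (NN y) := Nat.log_mono_right (hF y hyF)
    omega
  have hstep : ∑ j ∈ Finset.range (J+1),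
        ∑ y ∈ F.filter (fun y => Nat.log 2 (NN y) = j), ((NN y:ℝ))^(-t)
      ≤ ∑ j ∈ Finset.Ico J0 (max J0 (J+1)), (8:ℝ)^d * ρ^j := by
    rw [← Finset.sum_filter_of_ne (p := fun j => J0 ≤ j)
      (by intro j hj hne; by_contra hc; exact hne (hlow j hj (by omega)))]
    have hsub2 : (Finset.range (J+1)).filter (fun j => J0 ≤ j) ⊆ Finset.Ico J0 (max J0 (J+1)) := by
      intro j hj
      rw [Finset.mem_filter, Finset.mem_range] at hj
      rw [Finset.mem_Ico]
      constructor
      · exact hj.2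
      · exact lt_of_lt_of_le hj.1 (le_max_right _ _)
    calc ∑ j ∈ (Finset.range (J+1)).filter (fun j => J0 ≤ j),
          ∑ y ∈ F.filter (fun y => Nat.log 2 (NN y) = j), ((NN y:ℝ))^(-t)
        ≤ ∑ j ∈ Finset.Ico J0 (max J0 (J+1)),
          ∑ y ∈ F.filter (fun y => Nat.log 2 (NN y) = j), ((NN y:ℝ))^(-t) :=
          Finset.sum_le_sum_of_subset_of_nonneg hsub2 (fun j _ _ =>
            Finset.sum_nonneg fun y _ => Real.rpow_nonneg (Nat.cast_nonneg _) _)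
      _ ≤ ∑ j ∈ Finset.Ico J0 (max J0 (J+1)), (8:ℝ)^d * ρ^j :=
          Finset.sum_le_sum fun j _ => fiber_sum_le _ ht0.le j
  refine hstep.trans ?_
  rw [← Finset.mul_sum, geom_sum_Ico (ne_of_lt hρ1) (le_max_left _ _)]
  set n := max J0 (J+1)
  have h1 : (ρ^n - ρ^J0)/(ρ - 1) ≤ ρ^J0 / (1 - ρ) := by
    have heq : (ρ^n - ρ^J0)/(ρ - 1) = (ρ^J0 - ρ^n)/(1 - ρ) := by
      rw [← neg_div_neg_eq]
      congr 1 <;> ring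
    rw [heq]
    apply div_le_div_of_nonneg_right ?_ (by linarith)
    have hρn : 0 ≤ ρ^n := by positivity
    linarith
  have hρJ0 : ρ^J0 ≤ (2:ℝ)^(t - (d:ℝ)) * ((M:ℝ)) ^ ((d:ℝ) - t) := by
    rw [hρdef, ← pow_rpow_comm]
    have h2M : (M:ℝ) < 2 * (2:ℝ)^J0 := by
      have := Nat.lt_pow_succ_log_self (b := 2) (by norm_num) M
      rw [← hJ0] at this
      have : (M:ℝ) < ((2^(J0+1) : ℕ) : ℝ) := by exact_mod_cast this
      calc (M:ℝ) < ((2^(J0+1) : ℕ) : ℝ) := this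
        _ = 2 * (2:ℝ)^J0 := by push_cast; ring
    have hM2 : (0:ℝ) < (M:ℝ)/2 := by
      have : (0:ℝ) < (M:ℝ) := by exact_mod_cast hM
      linarith
    calc ((2:ℝ)^J0) ^ ((d:ℝ) - t) ≤ ((M:ℝ)/2) ^ ((d:ℝ) - t) := by
          apply Real.rpow_le_rpow_of_nonpos hM2 (by linarith) (by linarith)
      _ = (2:ℝ)^(t - (d:ℝ)) * ((M:ℝ)) ^ ((d:ℝ) - t) := by
          rw [Real.div_rpow (Nat.cast_nonneg _) (by norm_num), div_eq_mul_inv,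
            ← Real.rpow_neg (by norm_num : (0:ℝ) ≤ 2), neg_sub]
          ring
  calc (8:ℝ)^d * ((ρ^n - ρ^J0)/(ρ - 1)) ≤ (8:ℝ)^d * (ρ^J0/(1-ρ)) := by
        apply mul_le_mul_of_nonneg_left h1 (by positivity)
    _ ≤ (8:ℝ)^d * (((2:ℝ)^(t - (d:ℝ)) * ((M:ℝ)) ^ ((d:ℝ) - t))/(1-ρ)) := by
        apply mul_le_mul_of_nonneg_left ?_ (by positivity)
        apply div_le_div_of_nonneg_right hρJ0 (by linarith)
    _ = ((8:ℝ)^d * (2:ℝ)^(t - (d:ℝ)) / (1 - ρ)) * ((M:ℝ)) ^ ((d:ℝ) - t) := by ring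

lemma summable_NN {t : ℝ} (htd : (d:ℝ) < t) :
    Summable (fun y : Fin d → ℤ => ((NN y:ℝ)) ^ (-t)) := by
  obtain ⟨C, hC, hB⟩ := lemB (d := d) htd
  apply summable_of_sum_le (fun y => Real.rpow_nonneg (Nat.cast_nonneg _) _)
  intro F
  have := hB 1 le_rfl F (fun y _ => one_le_NN y)
  simpa using this


lemma natAbs_le_nn (y : Fin d → ℤ) (i : Fin d) : (y i).natAbs ≤ nn y :=
  Finset.le_sup (f := fun i => (y i).natAbs) (Finset.mem_univ i)

lemma nn_add_le (x y : Fin d → ℤ) : nn (x + y) ≤ nn x + nn y := by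
  rw [nn_le_iff]
  intro i
  calc ((x + y) i).natAbs = (x i + y i).natAbs := rfl
    _ ≤ (x i).natAbs + (y i).natAbs := Int.natAbs_add_le _ _
    _ ≤ nn x + nn y := Nat.add_le_add (natAbs_le_nn x i) (natAbs_le_nn y i)

lemma nn_neg (y : Fin d → ℤ) : nn (-y) = nn y := by
  unfold nn
  congr 1
  funext i
  simp [Int.natAbs_neg]

lemma nn_sub_le (x y : Fin d → ℤ) : nn x ≤ nn (x - y) + nn y := by
  have := nn_add_le (x - y) y
  simpa using this

lemma NN_triangle (x y : Fin d → ℤ) : NN x + 1 ≤ NN (x - y) + NN y := by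
  have := nn_sub_le x y
  simp only [NN]
  omega

lemma NN_le_mul (x y : Fin d → ℤ) : NN y ≤ NN x * NN (x - y) := by
  have h1 : nn y ≤ nn (y - x) + nn x := nn_sub_le y x
  have h2 : nn (y - x) = nn (x - y) := by
    rw [← nn_neg (y - x)]
    congr 1
    abel
  simp only [NN]
  nlinarith [h1, h2]

lemma core (hd : 1 ≤ d) {a b : ℝ} (hb : 0 < b) (hba : b ≤ a) (had : a < (d:ℝ))
    (habd : (d:ℝ) < a + b) :
    ∃ C0 : ℝ, 0 < C0 ∧ ∀ x : Fin d → ℤ, ∀ F : Finset (Fin d → ℤ),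
      ∑ y ∈ F, ((NN (x - y) : ℝ))^(-a) * ((NN y : ℝ))^(-b)
        ≤ C0 * ((NN x : ℝ)) ^ ((d:ℝ) - (a+b)) := by
  have ha : 0 < a := lt_of_lt_of_le hb hba
  have hbd : b < (d:ℝ) := lt_of_le_of_lt hba had
  obtain ⟨CA, hCA, hA⟩ := lemA (d := d) ha had
  obtain ⟨CA', hCA', hA'⟩ := lemA (d := d) hb hbd
  obtain ⟨CB, hCB, hBB⟩ := lemB (d := d) habd
  classical
  set C0 : ℝ := (2:ℝ)^b * CA + (2:ℝ)^a * (2:ℝ)^((d:ℝ)-b) * CA' + (2:ℝ)^a * CB with hC0def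
  have h2b : (0:ℝ) < (2:ℝ)^b := Real.rpow_pos_of_pos (by norm_num) _
  have h2a : (0:ℝ) < (2:ℝ)^a := Real.rpow_pos_of_pos (by norm_num) _
  have h2db : (0:ℝ) < (2:ℝ)^((d:ℝ)-b) := Real.rpow_pos_of_pos (by norm_num) _
  have hC0 : 0 < C0 := by positivity
  refine ⟨C0, hC0, ?_⟩
  intro x F
  set R := NN x with hRdef
  have hR1 : 1 ≤ R := one_le_NN x
  have hRpos : (0:ℝ) < (R:ℝ) := by exact_mod_cast hR1
  set v : (Fin d → ℤ) → ℝ := fun y => ((NN (x - y) : ℝ))^(-a) * ((NN y : ℝ))^(-b) with hvdef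
  have hvnn : ∀ y, 0 ≤ v y := fun y =>
    mul_nonneg (Real.rpow_nonneg (Nat.cast_nonneg _) _) (Real.rpow_nonneg (Nat.cast_nonneg _) _)
  set p : (Fin d → ℤ) → Prop := fun y => 2 * NN (x - y) ≤ R with hpdef
  set q : (Fin d → ℤ) → Prop := fun y => 2 * R < NN y with hqdef
  have hsplit1 : ∑ y ∈ F, v y
      = ∑ y ∈ F.filter p, v y + ∑ y ∈ (F.filter fun y => ¬ p y).filter q, v y
        + ∑ y ∈ (F.filter fun y => ¬ p y).filter (fun y => ¬ q y), v y := by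
    rw [← Finset.sum_filter_add_sum_filter_not F p v,
      ← Finset.sum_filter_add_sum_filter_not (F.filter fun y => ¬ p y) q v]
    ring
  -- Region 2 : small NN (x - y)
  have hS2 : ∑ y ∈ F.filter p, v y ≤ (2:ℝ)^b * CA * ((R:ℝ)) ^ ((d:ℝ) - (a+b)) := by
    have hpt : ∀ y ∈ F.filter p, v y ≤ ((NN (x-y):ℝ))^(-a) * (((R:ℝ)/2))^(-b) := by
      intro y hy
      have hyp : 2 * NN (x - y) ≤ R := (Finset.mem_filter.mp hy).2
      have htri := NN_triangle x y
      have hNy : R ≤ 2 * NN y := by omega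
      have hNyR : (R:ℝ)/2 ≤ (NN y : ℝ) := by
        have : (R:ℝ) ≤ 2 * (NN y : ℝ) := by exact_mod_cast hNy
        linarith
      apply mul_le_mul_of_nonneg_left ?_ (Real.rpow_nonneg (Nat.cast_nonneg _) _)
      exact Real.rpow_le_rpow_of_nonpos (by linarith) hNyR (by linarith)
    have step1 : ∑ y ∈ F.filter p, v y
        ≤ (∑ y ∈ F.filter p, ((NN (x-y):ℝ))^(-a)) * (((R:ℝ)/2))^(-b) := by
      rw [Finset.sum_mul]
      exact Finset.sum_le_sum hpt
    have himg : ∑ y ∈ F.filter p, ((NN (x-y):ℝ))^(-a)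
        = ∑ z ∈ (F.filter p).image (fun y => x - y), ((NN z:ℝ))^(-a) := by
      rw [Finset.sum_image]
      intro y1 _ y2 _ h
      have hxy : x - y1 = x - y2 := h
      exact sub_right_injective hxy
    have hsub : (F.filter p).image (fun y => x - y) ⊆ box d (R - 1) := by
      intro z hz
      rw [Finset.mem_image] at hz
      obtain ⟨y, hy, rfl⟩ := hz
      have hyp : 2 * NN (x - y) ≤ R := (Finset.mem_filter.mp hy).2
      rw [mem_box]
      have := one_le_NN (x - y)
      simp only [NN] at hyp ⊢
      omega
    have hboxsum : ∑ z ∈ (F.filter p).image (fun y => x - y), ((NN z:ℝ))^(-a)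
        ≤ CA * ((R:ℝ)) ^ ((d:ℝ) - a) := by
      calc ∑ z ∈ (F.filter p).image (fun y => x - y), ((NN z:ℝ))^(-a)
          ≤ ∑ z ∈ box d (R-1), ((NN z:ℝ))^(-a) :=
            Finset.sum_le_sum_of_subset_of_nonneg hsub
              (fun z _ _ => Real.rpow_nonneg (Nat.cast_nonneg _) _)
        _ ≤ CA * (((R-1:ℕ):ℝ)+1) ^ ((d:ℝ) - a) := hA (R-1)
        _ = CA * ((R:ℝ)) ^ ((d:ℝ) - a) := by
            congr 2
            have : R - 1 + 1 = R := by omega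
            exact_mod_cast congrArg (fun n : ℕ => (n:ℝ)) this
    have hhalf : (((R:ℝ)/2))^(-b) = (2:ℝ)^b * ((R:ℝ))^(-b) := by
      rw [Real.div_rpow hRpos.le (by norm_num), div_eq_mul_inv, ← Real.rpow_neg (by norm_num : (0:ℝ) ≤ 2), neg_neg]
      ring
    calc ∑ y ∈ F.filter p, v y
        ≤ (∑ y ∈ F.filter p, ((NN (x-y):ℝ))^(-a)) * (((R:ℝ)/2))^(-b) := step1
      _ ≤ (CA * ((R:ℝ)) ^ ((d:ℝ) - a)) * (((R:ℝ)/2))^(-b) := by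
          apply mul_le_mul_of_nonneg_right ?_ (Real.rpow_nonneg (by positivity) _)
          rw [himg]; exact hboxsum
      _ = (2:ℝ)^b * CA * (((R:ℝ)) ^ ((d:ℝ) - a) * ((R:ℝ))^(-b)) := by rw [hhalf]; ring
      _ = (2:ℝ)^b * CA * ((R:ℝ)) ^ ((d:ℝ) - (a+b)) := by
          rw [← Real.rpow_add hRpos]
          congr 2
          ring
  -- Region 3 : large NN y
  have hS3 : ∑ y ∈ (F.filter fun y => ¬ p y).filter q, v y
      ≤ (2:ℝ)^a * CB * ((R:ℝ)) ^ ((d:ℝ) - (a+b)) := by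
    set F3 := (F.filter fun y => ¬ p y).filter q with hF3
    have hpt : ∀ y ∈ F3, v y ≤ (2:ℝ)^a * ((NN y:ℝ))^(-(a+b)) := by
      intro y hy
      have hyq : 2 * R < NN y := (Finset.mem_filter.mp hy).2
      have hkey : (NN y : ℝ)/2 ≤ (NN (x - y) : ℝ) := by
        have h1 : (nn y : ℝ) ≤ (nn (x - y) : ℝ) + (nn x : ℝ) := by
          have h1' : nn y ≤ nn (y - x) + nn x := nn_sub_le y x
          have h2' : nn (y - x) = nn (x - y) := by
            rw [← nn_neg (y - x)]; congr 1; abel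
          rw [h2'] at h1'
          exact_mod_cast h1'
        have h2 : (R : ℝ) ≤ (NN y : ℝ)/2 := by
          have : 2 * R + 1 ≤ NN y := hyq
          have : (2 * R : ℝ) + 1 ≤ (NN y : ℝ) := by exact_mod_cast this
          linarith
        have h3 : (NN (x - y) : ℝ) = (nn (x - y) : ℝ) + 1 := by
          simp [NN]
        have h4 : (NN y : ℝ) = (nn y : ℝ) + 1 := by simp [NN]
        have h5 : (R : ℝ) = (nn x : ℝ) + 1 := by simp [hRdef, NN]
        linarith
      have hNy2 : (0:ℝ) < (NN y : ℝ)/2 := by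
        have := NN_real_pos y
        linarith
      have hstep : ((NN (x - y) : ℝ))^(-a) ≤ ((NN y : ℝ)/2)^(-a) :=
        Real.rpow_le_rpow_of_nonpos hNy2 hkey (by linarith)
      have hhalf : ((NN y : ℝ)/2)^(-a) = (2:ℝ)^a * ((NN y:ℝ))^(-a) := by
        rw [Real.div_rpow (Nat.cast_nonneg _) (by norm_num), div_eq_mul_inv,
          ← Real.rpow_neg (by norm_num : (0:ℝ) ≤ 2), neg_neg]
        ring
      calc v y ≤ ((NN y : ℝ)/2)^(-a) * ((NN y : ℝ))^(-b) := by
            apply mul_le_mul_of_nonneg_right hstep (Real.rpow_nonneg (Nat.cast_nonneg _) _)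
        _ = (2:ℝ)^a * (((NN y:ℝ))^(-a) * ((NN y:ℝ))^(-b)) := by rw [hhalf]; ring
        _ = (2:ℝ)^a * ((NN y:ℝ))^(-(a+b)) := by
            rw [← Real.rpow_add (NN_real_pos y)]
            congr 2
            ring
    have hF3M : ∀ y ∈ F3, R ≤ NN y := by
      intro y hy
      have hyq : 2 * R < NN y := (Finset.mem_filter.mp hy).2
      omega
    calc ∑ y ∈ F3, v y ≤ ∑ y ∈ F3, (2:ℝ)^a * ((NN y:ℝ))^(-(a+b)) := Finset.sum_le_sum hpt
      _ = (2:ℝ)^a * ∑ y ∈ F3, ((NN y:ℝ))^(-(a+b)) := by rw [Finset.mul_sum]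
      _ ≤ (2:ℝ)^a * (CB * ((R:ℝ)) ^ ((d:ℝ) - (a+b))) := by
          apply mul_le_mul_of_nonneg_left (hBB R hR1 F3 hF3M) h2a.le
      _ = (2:ℝ)^a * CB * ((R:ℝ)) ^ ((d:ℝ) - (a+b)) := by ring
  -- Region 1 : middle
  have hS1 : ∑ y ∈ (F.filter fun y => ¬ p y).filter (fun y => ¬ q y), v y
      ≤ (2:ℝ)^a * (2:ℝ)^((d:ℝ)-b) * CA' * ((R:ℝ)) ^ ((d:ℝ) - (a+b)) := by
    set F1 := (F.filter fun y => ¬ p y).filter (fun y => ¬ q y) with hF1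
    have hpt : ∀ y ∈ F1, v y ≤ (((R:ℝ)/2))^(-a) * ((NN y:ℝ))^(-b) := by
      intro y hy
      have hynp : ¬ (2 * NN (x - y) ≤ R) := (Finset.mem_filter.mp (Finset.mem_filter.mp hy).1).2
      have h1 : (R:ℝ)/2 ≤ (NN (x - y) : ℝ) := by
        have : R ≤ 2 * NN (x - y) := by omega
        have : (R:ℝ) ≤ 2 * (NN (x - y) : ℝ) := by exact_mod_cast this
        linarith
      apply mul_le_mul_of_nonneg_right ?_ (Real.rpow_nonneg (Nat.cast_nonneg _) _)
      exact Real.rpow_le_rpow_of_nonpos (by linarith) h1 (by linarith)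
    have hsub : F1 ⊆ box d (2*R - 1) := by
      intro y hy
      have hynq : ¬ (2 * R < NN y) := (Finset.mem_filter.mp hy).2
      rw [mem_box]
      simp only [NN] at hynq
      omega
    have hboxsum : ∑ y ∈ F1, ((NN y:ℝ))^(-b) ≤ CA' * (2 * (R:ℝ)) ^ ((d:ℝ) - b) := by
      calc ∑ y ∈ F1, ((NN y:ℝ))^(-b)
          ≤ ∑ y ∈ box d (2*R-1), ((NN y:ℝ))^(-b) :=
            Finset.sum_le_sum_of_subset_of_nonneg hsub
              (fun z _ _ => Real.rpow_nonneg (Nat.cast_nonneg _) _)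
        _ ≤ CA' * (((2*R-1:ℕ):ℝ)+1) ^ ((d:ℝ) - b) := hA' (2*R-1)
        _ = CA' * (2 * (R:ℝ)) ^ ((d:ℝ) - b) := by
            congr 2
            have : 2*R - 1 + 1 = 2*R := by omega
            have h' : ((2*R - 1 + 1 : ℕ) : ℝ) = ((2*R : ℕ) : ℝ) := by exact_mod_cast congrArg (fun n : ℕ => (n:ℝ)) this
            push_cast at h' ⊢
            linarith
    have hhalf : (((R:ℝ)/2))^(-a) = (2:ℝ)^a * ((R:ℝ))^(-a) := by
      rw [Real.div_rpow hRpos.le (by norm_num), div_eq_mul_inv,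
        ← Real.rpow_neg (by norm_num : (0:ℝ) ≤ 2), neg_neg]
      ring
    have h2R : (2 * (R:ℝ)) ^ ((d:ℝ) - b) = (2:ℝ)^((d:ℝ)-b) * ((R:ℝ))^((d:ℝ)-b) :=
      Real.mul_rpow (by norm_num) hRpos.le
    calc ∑ y ∈ F1, v y ≤ ∑ y ∈ F1, (((R:ℝ)/2))^(-a) * ((NN y:ℝ))^(-b) := Finset.sum_le_sum hpt
      _ = (((R:ℝ)/2))^(-a) * ∑ y ∈ F1, ((NN y:ℝ))^(-b) := by rw [Finset.mul_sum]
      _ ≤ (((R:ℝ)/2))^(-a) * (CA' * (2 * (R:ℝ)) ^ ((d:ℝ) - b)) := by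
          apply mul_le_mul_of_nonneg_left hboxsum (Real.rpow_nonneg (by positivity) _)
      _ = (2:ℝ)^a * (2:ℝ)^((d:ℝ)-b) * CA' * (((R:ℝ))^(-a) * ((R:ℝ))^((d:ℝ)-b)) := by
          rw [hhalf, h2R]; ring
      _ = (2:ℝ)^a * (2:ℝ)^((d:ℝ)-b) * CA' * ((R:ℝ)) ^ ((d:ℝ) - (a+b)) := by
          rw [← Real.rpow_add hRpos]
          congr 2
          ring
  rw [hsplit1]
  have hRnn : 0 ≤ ((R:ℝ)) ^ ((d:ℝ) - (a+b)) := Real.rpow_nonneg hRpos.le _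
  calc ∑ y ∈ F.filter p, v y + ∑ y ∈ (F.filter fun y => ¬ p y).filter q, v y
        + ∑ y ∈ (F.filter fun y => ¬ p y).filter (fun y => ¬ q y), v y
      ≤ (2:ℝ)^b * CA * ((R:ℝ)) ^ ((d:ℝ) - (a+b)) + (2:ℝ)^a * CB * ((R:ℝ)) ^ ((d:ℝ) - (a+b))
        + (2:ℝ)^a * (2:ℝ)^((d:ℝ)-b) * CA' * ((R:ℝ)) ^ ((d:ℝ) - (a+b)) := by
        gcongr
    _ = C0 * ((R:ℝ)) ^ ((d:ℝ) - (a+b)) := by rw [hC0def]; ring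

lemma nn_le_znorm (hd : 1 ≤ d) (y : Fin d → ℤ) : (nn y : ℝ) ≤ znorm y := by
  have hne : (Finset.univ : Finset (Fin d)).Nonempty := by
    refine ⟨⟨0, hd⟩, Finset.mem_univ _⟩
  obtain ⟨i, _, hi⟩ := Finset.exists_mem_eq_sup Finset.univ hne (fun i => (y i).natAbs)
  rw [nn, hi]
  have h1 : ((y i).natAbs : ℝ) = |((y i : ℝ))| := by
    rw [Nat.cast_natAbs, Int.cast_abs]
  rw [h1, ← Real.sqrt_sq_eq_abs, znorm]
  apply Real.sqrt_le_sqrt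
  exact Finset.single_le_sum (f := fun i => ((y i : ℝ))^2) (fun i _ => sq_nonneg _)
    (Finset.mem_univ i)

lemma znorm_le_d_mul (y : Fin d → ℤ) : znorm y ≤ (d:ℝ) * (nn y : ℝ) := by
  rw [znorm]
  have hterm : ∀ i : Fin d, ((y i : ℝ))^2 ≤ ((nn y : ℝ))^2 := by
    intro i
    have h1 : ((y i).natAbs : ℝ) ≤ (nn y : ℝ) := by exact_mod_cast natAbs_le_nn y i
    have h2 : |((y i : ℝ))| ≤ (nn y : ℝ) := by
      rwa [Nat.cast_natAbs, Int.cast_abs] at h1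
    calc ((y i : ℝ))^2 = |((y i : ℝ))|^2 := (sq_abs _).symm
      _ ≤ ((nn y : ℝ))^2 := by
          apply pow_le_pow_left₀ (abs_nonneg _) h2
  have hsum : ∑ i, ((y i : ℝ))^2 ≤ ((d:ℝ) * (nn y : ℝ))^2 := by
    calc ∑ i, ((y i : ℝ))^2 ≤ ∑ _i : Fin d, ((nn y : ℝ))^2 :=
          Finset.sum_le_sum (fun i _ => hterm i)
      _ = (d:ℝ) * ((nn y : ℝ))^2 := by
          rw [Finset.sum_const]
          simp [nsmul_eq_mul]
      _ ≤ ((d:ℝ) * (nn y : ℝ))^2 := by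
          have hd2 : (d:ℝ) ≤ (d:ℝ)^2 := by
            have : d ≤ d^2 := by nlinarith
            exact_mod_cast this
          have hnn2 : (0:ℝ) ≤ ((nn y : ℝ))^2 := sq_nonneg _
          nlinarith
  calc Real.sqrt (∑ i, ((y i : ℝ))^2) ≤ Real.sqrt (((d:ℝ) * (nn y : ℝ))^2) :=
        Real.sqrt_le_sqrt hsum
    _ = (d:ℝ) * (nn y : ℝ) := Real.sqrt_sq (by positivity)

end Stmt2Aux

open Stmt2Aux in
theorem stmt2 (d : ℕ) (hd : 1 ≤ d) (a b : ℝ) (hb : 0 < b) (hba : b ≤ a)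
    (had : a < (d : ℝ)) (habd : (d : ℝ) < a + b) :
    ∃ C : ℝ, 0 < C ∧ ∀ f g : (Fin d → ℤ) → ℝ,
      (∀ x, |f x| ≤ (znorm x + 1) ^ (-a)) →
      (∀ x, |g x| ≤ (znorm x + 1) ^ (-b)) →
      ∀ x : Fin d → ℤ,
        |∑' y : Fin d → ℤ, f (x - y) * g y| ≤ C * (znorm x + 1) ^ ((d : ℝ) - (a + b)) := by
  have ha : 0 < a := lt_of_lt_of_le hb hba
  obtain ⟨C0, hC0, hcore⟩ := core hd hb hba had habd
  have hsumNN := summable_NN (d := d) habd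
  have hdpos : (0:ℝ) < (d:ℝ) := by exact_mod_cast hd
  set e : ℝ := (d:ℝ) - (a+b) with hedef
  have he0 : e ≤ 0 := by rw [hedef]; linarith
  set C : ℝ := C0 * (d:ℝ)^((a+b) - (d:ℝ)) with hCdef
  have hC : 0 < C := mul_pos hC0 (Real.rpow_pos_of_pos hdpos _)
  refine ⟨C, hC, ?_⟩
  intro f g hf hg x
  have hNle : ∀ z : Fin d → ℤ, (NN z : ℝ) ≤ znorm z + 1 := by
    intro z
    have h1 := nn_le_znorm hd z
    have h2 : (NN z : ℝ) = (nn z : ℝ) + 1 := by simp [NN]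
    linarith
  have hfb : ∀ z, |f z| ≤ ((NN z : ℝ))^(-a) := fun z =>
    (hf z).trans (Real.rpow_le_rpow_of_nonpos (NN_real_pos z) (hNle z) (by linarith))
  have hgb : ∀ z, |g z| ≤ ((NN z : ℝ))^(-b) := fun z =>
    (hg z).trans (Real.rpow_le_rpow_of_nonpos (NN_real_pos z) (hNle z) (by linarith))
  set h : (Fin d → ℤ) → ℝ := fun y => ((NN (x - y):ℝ))^(-a) * ((NN y:ℝ))^(-b) with hhdef
  have hnn : ∀ y, 0 ≤ h y := fun y =>
    mul_nonneg (Real.rpow_nonneg (Nat.cast_nonneg _) _) (Real.rpow_nonneg (Nat.cast_nonneg _) _)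
  have habs : ∀ y, |f (x - y) * g y| ≤ h y := by
    intro y
    rw [abs_mul]
    exact mul_le_mul (hfb _) (hgb _) (abs_nonneg _) (Real.rpow_nonneg (Nat.cast_nonneg _) _)
  have hdom : ∀ y, h y ≤ ((NN x:ℝ))^a * ((NN y:ℝ))^(-(a+b)) := by
    intro y
    have hpos1 := NN_real_pos (x - y)
    have hpos2 := NN_real_pos x
    have hpos3 := NN_real_pos y
    have hmul : (NN y : ℝ) ≤ (NN x : ℝ) * (NN (x-y):ℝ) := by
      exact_mod_cast NN_le_mul x y
    have k1 : ((NN x:ℝ) * (NN (x-y):ℝ))^(-a) ≤ ((NN y:ℝ))^(-a) :=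
      Real.rpow_le_rpow_of_nonpos hpos3 hmul (by linarith)
    rw [Real.mul_rpow hpos2.le hpos1.le] at k1
    have k2 := mul_le_mul_of_nonneg_left k1 (Real.rpow_pos_of_pos hpos2 a).le
    have h1 : ((NN (x-y):ℝ))^(-a) ≤ ((NN x:ℝ))^a * ((NN y:ℝ))^(-a) := by
      calc ((NN (x-y):ℝ))^(-a)
          = ((NN x:ℝ))^a * (((NN x:ℝ))^(-a) * ((NN (x-y):ℝ))^(-a)) := by
            rw [← mul_assoc, ← Real.rpow_add hpos2]
            simp
        _ ≤ ((NN x:ℝ))^a * ((NN y:ℝ))^(-a) := k2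
    calc h y ≤ (((NN x:ℝ))^a * ((NN y:ℝ))^(-a)) * ((NN y:ℝ))^(-b) :=
          mul_le_mul_of_nonneg_right h1 (Real.rpow_nonneg (Nat.cast_nonneg _) _)
      _ = ((NN x:ℝ))^a * ((NN y:ℝ))^(-(a+b)) := by
          rw [mul_assoc, ← Real.rpow_add hpos3]
          rw [neg_add]
  have hsumh : Summable h :=
    Summable.of_nonneg_of_le hnn hdom (hsumNN.mul_left _)
  have hsumabs : Summable (fun y => |f (x - y) * g y|) :=
    Summable.of_nonneg_of_le (fun y => abs_nonneg _) habs hsumh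
  have h1 : |∑' y, f (x-y) * g y| ≤ ∑' y, |f (x-y) * g y| := by
    have := norm_tsum_le_tsum_norm (f := fun y : Fin d → ℤ => f (x-y) * g y)
      (by simpa only [Real.norm_eq_abs] using hsumabs)
    simpa only [Real.norm_eq_abs] using this
  have h2 : ∑' y, |f (x-y) * g y| ≤ ∑' y, h y := Summable.tsum_le_tsum habs hsumabs hsumh
  have h3 : ∑' y, h y ≤ C0 * ((NN x:ℝ))^e := Summable.tsum_le_of_sum_le hsumh (fun F => hcore x F)
  have hz1 : (0:ℝ) < znorm x + 1 := by
    have : 0 ≤ znorm x := Real.sqrt_nonneg _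
    linarith
  have hzd : znorm x + 1 ≤ (d:ℝ) * (NN x : ℝ) := by
    have hz2 := znorm_le_d_mul x
    have hNN : (NN x : ℝ) = (nn x : ℝ) + 1 := by simp [NN]
    have hd' : (1:ℝ) ≤ (d:ℝ) := by exact_mod_cast hd
    have hnxnn : (0:ℝ) ≤ (nn x : ℝ) := Nat.cast_nonneg _
    nlinarith
  have h4 : ((NN x:ℝ))^e ≤ (d:ℝ)^((a+b)-(d:ℝ)) * (znorm x + 1)^e := by
    have k1 : ((d:ℝ) * (NN x:ℝ))^e ≤ (znorm x + 1)^e :=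
      Real.rpow_le_rpow_of_nonpos hz1 hzd he0
    rw [Real.mul_rpow hdpos.le (Nat.cast_nonneg _)] at k1
    have k2 := mul_le_mul_of_nonneg_left k1 (Real.rpow_pos_of_pos hdpos ((a+b)-(d:ℝ))).le
    calc ((NN x:ℝ))^e = (d:ℝ)^((a+b)-(d:ℝ)) * ((d:ℝ)^e * ((NN x:ℝ))^e) := by
          rw [← mul_assoc, ← Real.rpow_add hdpos]
          have : (a+b) - (d:ℝ) + e = 0 := by rw [hedef]; ring
          rw [this, Real.rpow_zero, one_mul]
      _ ≤ (d:ℝ)^((a+b)-(d:ℝ)) * (znorm x + 1)^e := k2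
  calc |∑' y, f (x-y) * g y| ≤ ∑' y, h y := h1.trans h2
    _ ≤ C0 * ((NN x:ℝ))^e := h3
    _ ≤ C0 * ((d:ℝ)^((a+b)-(d:ℝ)) * (znorm x + 1)^e) := by
        apply mul_le_mul_of_nonneg_left h4 hC0.le
    _ = C * (znorm x + 1)^e := by rw [hCdef]; ring
end
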